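/- With the notation of the Beltrami flow construction, the average of W ⊗ W over the torus equals (1/2) Σ_{|k|=λ̄} |a_k|² (Id − (k/|k|) ⊗ (k/|k|)). -/

import Mathlib

open Matrix MeasureTheory

lemma char1D (m : ℤ) :
    ∫ x in Set.Icc (0:ℝ) (2 * Real.pi), Complex.exp (Complex.I * (m * x))
      = if m = 0 then ((2 * Real.pi : ℝ) : ℂ) else 0 := by
  rw [MeasureTheory.integral_Icc_eq_integral_Ioc,
    ← intervalIntegral.integral_of_le (by positivity : (0:ℝ) ≤ 2 * Real.pi)]
  by_cases hm : m = 0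
  · simp [hm]
  · have hc : (Complex.I * m) ≠ 0 := by
      simp [Complex.I_ne_zero, Complex.ext_iff]
      exact_mod_cast hm
    have h1 : ∀ x : ℝ, Complex.exp (Complex.I * (m * x)) = Complex.exp (Complex.I * m * x) := by
      intro x; ring_nf
    simp_rw [h1]
    rw [integral_exp_mul_complex (a := 0) (b := 2 * Real.pi) hc]
    have : Complex.exp (Complex.I * m * (2 * Real.pi)) = 1 := by
      rw [show Complex.I * m * (2 * Real.pi) = m * (2 * Real.pi * Complex.I) by ring]
      exact Complex.exp_int_mul_two_pi_mul_I m
    simp [hm, this]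

lemma char3D (m : Fin 3 → ℤ) :
    ∫ ξ in Set.Icc (0 : Fin 3 → ℝ) (fun _ => 2 * Real.pi),
      Complex.exp (Complex.I * ((∑ j, (m j : ℝ) * ξ j : ℝ) : ℂ))
      = if m = 0 then (((2 * Real.pi)^3 : ℝ) : ℂ) else 0 := by
  have hsplit : ∀ ξ : Fin 3 → ℝ,
      Complex.exp (Complex.I * ((∑ j, (m j : ℝ) * ξ j : ℝ) : ℂ))
        = ∏ j, Complex.exp (Complex.I * (m j * ξ j)) := by
    intro ξ
    rw [← Complex.exp_sum]
    congr 1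
    push_cast
    rw [Finset.mul_sum]
  simp_rw [hsplit]
  rw [← integral_indicator (measurableSet_Icc)]
  have hind : ∀ ξ : Fin 3 → ℝ,
      (Set.Icc (0 : Fin 3 → ℝ) (fun _ => 2 * Real.pi)).indicator
        (fun ξ => ∏ j, Complex.exp (Complex.I * (m j * ξ j))) ξ
      = ∏ j, (Set.Icc (0:ℝ) (2*Real.pi)).indicator
          (fun x => Complex.exp (Complex.I * (m j * x))) (ξ j) := by
    intro ξ
    by_cases h : ξ ∈ Set.Icc (0 : Fin 3 → ℝ) (fun _ => 2 * Real.pi)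
    · rw [Set.indicator_of_mem h]
      rw [← Set.pi_univ_Icc, Set.mem_univ_pi] at h
      refine Finset.prod_congr rfl fun j _ => ?_
      have := h j
      simp only [Pi.zero_apply] at this
      exact (Set.indicator_of_mem this (fun x => Complex.exp (Complex.I * (m j * x)))).symm
    · rw [Set.indicator_of_notMem h]
      rw [← Set.pi_univ_Icc, Set.mem_univ_pi] at h
      push_neg at h
      obtain ⟨j, hj⟩ := h
      simp only [Pi.zero_apply] at hj
      exact (Finset.prod_eq_zero (Finset.mem_univ j)
        (Set.indicator_of_notMem hj (fun x => Complex.exp (Complex.I * (m j * x))))).symm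
  simp_rw [hind]
  rw [MeasureTheory.integral_fintype_prod_volume_eq_prod (ι := Fin 3)
    (f := fun j x => (Set.Icc (0:ℝ) (2*Real.pi)).indicator
      (fun x => Complex.exp (Complex.I * (m j * x))) x)]
  have : ∀ j : Fin 3, ∫ x, (Set.Icc (0:ℝ) (2*Real.pi)).indicator
      (fun x => Complex.exp (Complex.I * (m j * x))) x
      = if m j = 0 then ((2 * Real.pi : ℝ) : ℂ) else 0 := by
    intro j
    rw [integral_indicator measurableSet_Icc]
    exact char1D (m j)
  simp_rw [this]
  by_cases hm : m = 0
  · simp only [hm, Pi.zero_apply, if_pos rfl, Finset.prod_const, Finset.card_univ,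
      Fintype.card_fin, if_true]
    push_cast
    ring
  · have : ∃ j, m j ≠ 0 := by
      by_contra h
      push_neg at h
      exact hm (funext h)
    obtain ⟨j, hj⟩ := this
    rw [if_neg hm]
    exact Finset.prod_eq_zero (Finset.mem_univ j) (by simp [hj])

lemma ortho (n A : Fin 3 → ℝ)
    (hs : n 0 ^ 2 + n 1 ^ 2 + n 2 ^ 2 = 1)
    (ht : A 0 ^ 2 + A 1 ^ 2 + A 2 ^ 2 = 1 / 2)
    (hu : A 0 * n 0 + A 1 * n 1 + A 2 * n 2 = 0) (i j : Fin 3) :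
    2 * (A i * A j) + 2 * ((crossProduct n A) i * (crossProduct n A) j) + n i * n j
      = if i = j then 1 else 0 := by
  have h2 : Real.sqrt 2 ^ 2 = 2 := Real.sq_sqrt (by norm_num)
  set C : Fin 3 → ℝ := crossProduct n A with hCdef
  have hC0 : C 0 = n 1 * A 2 - n 2 * A 1 := rfl
  have hC1 : C 1 = n 2 * A 0 - n 0 * A 2 := rfl
  have hC2 : C 2 = n 0 * A 1 - n 1 * A 0 := rfl
  set M : Matrix (Fin 3) (Fin 3) ℝ :=
    Matrix.of ![fun p => Real.sqrt 2 * A p, fun p => Real.sqrt 2 * C p, n] with hM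
  have hMM : M * Mᵀ = 1 := by
    ext p q
    fin_cases p <;> fin_cases q <;>
      simp only [hM, Matrix.mul_apply, Matrix.transpose_apply, Fin.sum_univ_three,
        Matrix.of_apply, Matrix.cons_val_zero, Matrix.cons_val_one, Matrix.head_cons,
        Matrix.cons_val_two, Matrix.tail_cons, Matrix.one_apply, Fin.zero_eta, Fin.mk_one,
        hC0, hC1, hC2] <;>
      norm_num [Fin.ext_iff]
    · linear_combination (A 0 ^ 2 + A 1 ^ 2 + A 2 ^ 2) * h2 + 2 * ht
    · ring
    · linear_combination Real.sqrt 2 * hu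
    · ring
    · linear_combination ((n 1 * A 2 - n 2 * A 1) ^ 2 + (n 2 * A 0 - n 0 * A 2) ^ 2
        + (n 0 * A 1 - n 1 * A 0) ^ 2) * h2
        + (2 * (A 0 ^ 2 + A 1 ^ 2 + A 2 ^ 2)) * hs + 2 * ht
        - (2 * (A 0 * n 0 + A 1 * n 1 + A 2 * n 2)) * hu
    · ring
    · linear_combination Real.sqrt 2 * hu
    · ring
    · linear_combination hs
  have hMM' : Mᵀ * M = 1 := mul_eq_one_comm.mp hMM
  have h : (Mᵀ * M) i j = (1 : Matrix (Fin 3) (Fin 3) ℝ) i j := by rw [hMM']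
  simp only [Matrix.mul_apply, Matrix.transpose_apply, Fin.sum_univ_three, hM,
    Matrix.of_apply, Matrix.cons_val_zero, Matrix.cons_val_one, Matrix.head_cons,
    Matrix.cons_val_two, Matrix.tail_cons, Matrix.one_apply] at h
  linear_combination h - (A i * A j + C i * C j) * h2

theorem statement2
    (lam : ℝ) (hlam : 1 ≤ lam)
    (Λ : Finset (Fin 3 → ℤ))
    (hΛnorm : ∀ k ∈ Λ, Real.sqrt (∑ i, ((k i : ℝ)) ^ 2) = lam)
    (hΛneg : ∀ k ∈ Λ, -k ∈ Λ)
    (A : (Fin 3 → ℤ) → (Fin 3 → ℝ))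
    (hAk : ∀ k ∈ Λ, ∑ i, A k i * (k i : ℝ) = 0)
    (hAnorm : ∀ k ∈ Λ, Real.sqrt (∑ i, (A k i) ^ 2) = 1 / Real.sqrt 2)
    (hAneg : ∀ k ∈ Λ, A (-k) = A k)
    (B : (Fin 3 → ℤ) → (Fin 3 → ℂ))
    (hB : ∀ k ∈ Λ, ∀ i, B k i = (A k i : ℂ)
        + Complex.I * ((crossProduct (lam⁻¹ • fun j => ((k j : ℝ))) (A k)) i : ℝ))
    (a : (Fin 3 → ℤ) → ℂ)
    (ha : ∀ k ∈ Λ, (starRingEnd ℂ) (a k) = a (-k))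
    (W : (Fin 3 → ℝ) → (Fin 3 → ℂ))
    (hW : ∀ ξ i, W ξ i = ∑ k ∈ Λ,
        a k * B k i * Complex.exp (Complex.I * ((∑ j, (k j : ℝ) * ξ j : ℝ) : ℂ))) :
    ∀ i j : Fin 3,
      ((((2 * Real.pi) ^ 3)⁻¹ : ℝ) : ℂ)
          * ∫ ξ in Set.Icc (0 : Fin 3 → ℝ) (fun _ => 2 * Real.pi), W ξ i * W ξ j
        = (1 / 2 : ℂ) * ∑ k ∈ Λ, (‖a k‖ ^ 2 : ℝ)
            * ((if i = j then 1 else 0) - (((k i : ℝ) * (k j : ℝ) / lam ^ 2 : ℝ) : ℂ)) := by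
  intro i j
  have hlam0 : lam ≠ 0 := by positivity
  have hc0 : (((2 * Real.pi) ^ 3 : ℝ) : ℂ) ≠ 0 := by
    simp only [ne_eq, Complex.ofReal_eq_zero]
    positivity
  -- expand the product
  have hprod : ∀ ξ : Fin 3 → ℝ, W ξ i * W ξ j
      = ∑ k ∈ Λ, ∑ k' ∈ Λ, (a k * B k i) * (a k' * B k' j)
          * Complex.exp (Complex.I * ((∑ l, ((k + k') l : ℝ) * ξ l : ℝ) : ℂ)) := by
    intro ξ
    rw [hW ξ i, hW ξ j, Finset.sum_mul_sum]
    refine Finset.sum_congr rfl fun k _ => Finset.sum_congr rfl fun k' _ => ?_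
    have hsum : ((∑ l, ((k + k') l : ℝ) * ξ l : ℝ))
        = (∑ l, (k l : ℝ) * ξ l) + (∑ l, (k' l : ℝ) * ξ l) := by
      rw [← Finset.sum_add_distrib]
      refine Finset.sum_congr rfl fun l _ => ?_
      simp only [Pi.add_apply]
      push_cast
      ring
    rw [hsum]
    push_cast
    rw [mul_add, Complex.exp_add]
    ring
  have hcont : ∀ (k k' : Fin 3 → ℤ), Continuous (fun ξ : Fin 3 → ℝ =>
      (a k * B k i) * (a k' * B k' j)
        * Complex.exp (Complex.I * ((∑ l, ((k + k') l : ℝ) * ξ l : ℝ) : ℂ))) := by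
    intro k k'
    refine continuous_const.mul (Complex.continuous_exp.comp (continuous_const.mul
      (Complex.continuous_ofReal.comp ?_)))
    exact continuous_finset_sum _ fun l _ => continuous_const.mul (continuous_apply l)
  have hint : ∀ (k k' : Fin 3 → ℤ), IntegrableOn (fun ξ : Fin 3 → ℝ =>
      (a k * B k i) * (a k' * B k' j)
        * Complex.exp (Complex.I * ((∑ l, ((k + k') l : ℝ) * ξ l : ℝ) : ℂ)))
      (Set.Icc 0 (fun _ => 2 * Real.pi)) volume :=
    fun k k' => ((hcont k k').continuousOn).integrableOn_compact isCompact_Icc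
  have hI : (∫ ξ in Set.Icc (0 : Fin 3 → ℝ) (fun _ => 2 * Real.pi), W ξ i * W ξ j)
      = ∑ k ∈ Λ, ∑ k' ∈ Λ, (a k * B k i) * (a k' * B k' j)
          * (if k + k' = 0 then (((2 * Real.pi)^3 : ℝ) : ℂ) else 0) := by
    simp_rw [hprod]
    rw [integral_finset_sum _ (fun k _ => integrable_finset_sum _ (fun k' _ => hint k k'))]
    refine Finset.sum_congr rfl fun k _ => ?_
    rw [integral_finset_sum _ (fun k' _ => hint k k')]
    refine Finset.sum_congr rfl fun k' _ => ?_
    rw [MeasureTheory.integral_const_mul, char3D (k + k')]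
  -- collapse the inner sum
  have hcollapse : ∀ k ∈ Λ, (∑ k' ∈ Λ, (a k * B k i) * (a k' * B k' j)
        * (if k + k' = 0 then (((2 * Real.pi)^3 : ℝ) : ℂ) else 0))
      = (a k * B k i) * (a (-k) * B (-k) j) * (((2 * Real.pi)^3 : ℝ) : ℂ) := by
    intro k hk
    have hiff : ∀ k' : Fin 3 → ℤ, (k + k' = 0) ↔ (k' = -k) := by
      intro k'
      rw [add_comm, add_eq_zero_iff_eq_neg]
    simp_rw [hiff, mul_ite, mul_zero]
    rw [Finset.sum_ite_eq' Λ (-k)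
      (fun k' => (a k * B k i) * (a k' * B k' j) * (((2 * Real.pi)^3 : ℝ) : ℂ))]
    rw [if_pos (hΛneg k hk)]
  rw [hI, Finset.sum_congr rfl hcollapse, ← Finset.sum_mul]
  -- now reduce to the algebraic identity
  set F : (Fin 3 → ℤ) → ℂ := fun k => (a k * B k i) * (a (-k) * B (-k) j) with hF
  have hstep : ∀ k ∈ Λ, F k + F (-k)
      = (‖a k‖ ^ 2 : ℝ)
          * ((if i = j then 1 else 0) - (((k i : ℝ) * (k j : ℝ) / lam ^ 2 : ℝ) : ℂ)) := by
    intro k hk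
    have hk' : -k ∈ Λ := hΛneg k hk
    set n : Fin 3 → ℝ := lam⁻¹ • fun l => ((k l : ℝ)) with hn
    set C : Fin 3 → ℝ := crossProduct n (A k) with hCdef
    -- B (-k) p = A k p - I * C p
    have hBneg : ∀ p, B (-k) p = (A k p : ℂ) - Complex.I * (C p : ℝ) := by
      intro p
      rw [hB (-k) hk' p, hAneg k hk]
      have hv : (fun l => (((-k) l : ℤ) : ℝ)) = -(fun l => ((k l : ℝ))) := by
        funext l
        simp [Pi.neg_apply]
      rw [hv, smul_neg, map_neg, LinearMap.neg_apply]
      push_cast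
      ring_nf
      rw [← hn, ← hCdef]
      simp [Pi.neg_apply]
      ring
    have hBk : ∀ p, B k p = (A k p : ℂ) + Complex.I * (C p : ℝ) := fun p => hB k hk p
    have hanegk : a (-k) = (starRingEnd ℂ) (a k) := (ha k hk).symm
    have haneg2 : a (-(-k)) = a k := by rw [neg_neg]
    have hmulconj : a k * (starRingEnd ℂ) (a k) = (‖a k‖ ^ 2 : ℝ) := by
      rw [Complex.mul_conj, Complex.sq_norm]
    -- the real identity
    have hs : n 0 ^ 2 + n 1 ^ 2 + n 2 ^ 2 = 1 := by
      have hsum : ((k 0 : ℝ))^2 + ((k 1 : ℝ))^2 + ((k 2 : ℝ))^2 = lam ^ 2 := by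
        have h1 := hΛnorm k hk
        have h2 : (0:ℝ) ≤ ∑ p, ((k p : ℝ))^2 := Finset.sum_nonneg fun p _ => sq_nonneg _
        have := Real.sq_sqrt h2
        rw [h1] at this
        rw [this, Fin.sum_univ_three]
      simp only [hn, Pi.smul_apply, smul_eq_mul]
      field_simp
      linear_combination hsum
    have ht : A k 0 ^ 2 + A k 1 ^ 2 + A k 2 ^ 2 = 1 / 2 := by
      have h1 := hAnorm k hk
      have h2 : (0:ℝ) ≤ ∑ p, (A k p)^2 := Finset.sum_nonneg fun p _ => sq_nonneg _
      have h3 := Real.sq_sqrt h2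
      rw [h1] at h3
      rw [← Fin.sum_univ_three (f := fun p => A k p ^ 2), ← h3]
      rw [div_pow, one_pow, Real.sq_sqrt (by norm_num : (0:ℝ) ≤ 2)]
    have hu : A k 0 * n 0 + A k 1 * n 1 + A k 2 * n 2 = 0 := by
      have h1 := hAk k hk
      rw [Fin.sum_univ_three] at h1
      simp only [hn, Pi.smul_apply, smul_eq_mul]
      linear_combination lam⁻¹ * h1
    have hON := ortho n (A k) hs ht hu i j
    have hnij : n i * n j = (k i : ℝ) * (k j : ℝ) / lam ^ 2 := by
      simp only [hn, Pi.smul_apply, smul_eq_mul]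
      rw [div_eq_mul_inv, ← inv_pow]
      ring
    have hreal : 2 * (A k i * A k j) + 2 * (C i * C j)
        = (if i = j then (1:ℝ) else 0) - (k i : ℝ) * (k j : ℝ) / lam ^ 2 := by
      rw [← hnij]
      linear_combination hON
    -- now the complex computation
    rw [hF]
    simp only [haneg2, hanegk, neg_neg]
    rw [hBk i, hBk j, hBneg i, hBneg j]
    have hcast : ((if i = j then (1:ℝ) else 0 : ℝ) : ℂ)
        = (if i = j then (1:ℂ) else 0) := by
      by_cases h : i = j <;> simp [h]
    calc (a k * ((A k i : ℂ) + Complex.I * (C i : ℝ)))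
          * ((starRingEnd ℂ) (a k) * ((A k j : ℂ) - Complex.I * (C j : ℝ)))
        + ((starRingEnd ℂ) (a k) * ((A k i : ℂ) - Complex.I * (C i : ℝ)))
          * (a k * ((A k j : ℂ) + Complex.I * (C j : ℝ)))
        = (a k * (starRingEnd ℂ) (a k))
            * (((2 * (A k i * A k j) + 2 * (C i * C j) : ℝ)) : ℂ) := by
          push_cast
          linear_combination (-2 * (C i : ℂ) * (C j : ℂ)
            * (a k * (starRingEnd ℂ) (a k))) * Complex.I_sq
      _ = (‖a k‖ ^ 2 : ℝ)
            * ((if i = j then 1 else 0) - (((k i : ℝ) * (k j : ℝ) / lam ^ 2 : ℝ) : ℂ)) := by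
          rw [hmulconj, hreal]
          push_cast
          rw [hcast]
  -- symmetrization
  have hsym : ∑ k ∈ Λ, F k = ∑ k ∈ Λ, F (-k) := by
    refine Finset.sum_nbij' (fun k => -k) (fun k => -k) (fun k hk => hΛneg k hk)
      (fun k hk => hΛneg k hk) (fun k _ => neg_neg k) (fun k _ => neg_neg k) ?_
    intro k _
    rw [neg_neg]
  have hkey : (2:ℂ) * ∑ k ∈ Λ, F k
      = ∑ k ∈ Λ, (‖a k‖ ^ 2 : ℝ)
          * ((if i = j then 1 else 0) - (((k i : ℝ) * (k j : ℝ) / lam ^ 2 : ℝ) : ℂ)) := by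
    calc (2:ℂ) * ∑ k ∈ Λ, F k = ∑ k ∈ Λ, F k + ∑ k ∈ Λ, F (-k) := by
          rw [← hsym]; ring
      _ = ∑ k ∈ Λ, (F k + F (-k)) := by rw [Finset.sum_add_distrib]
      _ = _ := Finset.sum_congr rfl hstep
  have hinv : (((((2 * Real.pi) ^ 3)⁻¹ : ℝ)) : ℂ) = (((2 * Real.pi)^3 : ℝ) : ℂ)⁻¹ := by
    push_cast
    ring
  rw [hinv]
  rw [inv_mul_eq_div, div_eq_iff hc0]
  linear_combination ((((2 * Real.pi)^3 : ℝ) : ℂ) / 2) * hkey
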